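/- Let ε > 0, L > 0, and let λ satisfy 0 < λ < ε/2 and e^{2λL}·(ε − 2λ) = ε. Then there exists a linear bound state ψ (for parameters ε, L, λ) that is not identically zero and is odd (ψ(−x) = −ψ(x) for all x). -/

import Mathlib

open Filter Topology Set

/-- A linear bound state for the double delta-well problem with parameters
`ε, L, lam`: `ψ` is continuous, decays at `±∞`, has derivative `ψ'` and satisfies
`ψ'' = lam² ψ` away from `±L`, and the one-sided limits of `ψ'` at `±L` exist and
jump by `-ε ψ`. -/
def IsLinearBoundState (ε L lam : ℝ) (ψ ψ' : ℝ → ℝ) : Prop :=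
  Continuous ψ ∧
  Tendsto ψ atTop (𝓝 0) ∧ Tendsto ψ atBot (𝓝 0) ∧
  (∀ x : ℝ, x ≠ L → x ≠ -L →
    HasDerivAt ψ (ψ' x) x ∧ HasDerivAt ψ' (lam ^ 2 * ψ x) x) ∧
  (∀ x : ℝ, x = L ∨ x = -L →
    ∃ a b : ℝ,
      Tendsto ψ' (𝓝[>] x) (𝓝 a) ∧
      Tendsto ψ' (𝓝[<] x) (𝓝 b) ∧
      a - b = -ε * ψ x)

lemma hasDerivAt_const_mul_exp (a c x : ℝ) :
    HasDerivAt (fun y => a * Real.exp (c * y)) (a * c * Real.exp (c * x)) x := by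
  have h : HasDerivAt (fun y : ℝ => c * y) c x := by
    simpa using (hasDerivAt_id x).const_mul c
  have h2 := h.exp.const_mul a
  rw [show a * c * Real.exp (c * x) = a * (Real.exp (c * x) * c) by ring]; exact h2

lemma hasDerivAt_sinh_mul (c x : ℝ) :
    HasDerivAt (fun y => Real.sinh (c * y)) (c * Real.cosh (c * x)) x := by
  have h : HasDerivAt (fun y : ℝ => c * y) c x := by
    simpa using (hasDerivAt_id x).const_mul c
  have h2 := h.sinh
  convert h2 using 1; ring

lemma hasDerivAt_const_mul_cosh (a c x : ℝ) :
    HasDerivAt (fun y => a * Real.cosh (c * y)) (a * c * Real.sinh (c * x)) x := by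
  have h : HasDerivAt (fun y : ℝ => c * y) c x := by
    simpa using (hasDerivAt_id x).const_mul c
  have h2 := h.cosh.const_mul a
  rw [show a * c * Real.sinh (c * x) = a * (Real.sinh (c * x) * c) by ring]; exact h2

/-- if `0 < lam < ε/2` and `e^{2 lam L} (ε - 2 lam) = ε`, there exists a
nonzero, odd linear bound state. -/
theorem exists_antisymmetric_linear_bound_state (ε L lam : ℝ)
    (hε : 0 < ε) (hL : 0 < L)
    (h1 : 0 < lam) (h2 : lam < ε / 2)
    (h3 : Real.exp (2 * lam * L) * (ε - 2 * lam) = ε) :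
    ∃ ψ ψ' : ℝ → ℝ, IsLinearBoundState ε L lam ψ ψ' ∧
      ψ ≠ 0 ∧ (∀ x : ℝ, ψ (-x) = -ψ x) := by
  set C : ℝ := Real.sinh (lam * L) * Real.exp (lam * L) with hC
  -- key spectral identity
  have hs : Real.exp (lam * L) ≠ 0 := (Real.exp_pos _).ne'
  have key : lam * Real.exp (lam * L) = ε * Real.sinh (lam * L) := by
    have he2 : Real.exp (2 * lam * L) = Real.exp (lam * L) * Real.exp (lam * L) := by
      rw [← Real.exp_add]; ring_nf
    have hsinh : Real.sinh (lam * L) =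
        (Real.exp (lam * L) - Real.exp (-(lam * L))) / 2 := Real.sinh_eq _
    have hneg : Real.exp (-(lam * L)) = (Real.exp (lam * L))⁻¹ := Real.exp_neg _
    rw [he2] at h3
    rw [hsinh, hneg]
    field_simp
    nlinarith [h3]
  have hCexp : C * Real.exp (-(lam * L)) = Real.sinh (lam * L) := by
    rw [hC, Real.exp_neg]
    field_simp
  -- the functions
  set ψ : ℝ → ℝ := fun x => if -L ≤ x then
      (if x ≤ L then Real.sinh (lam * x) else C * Real.exp (-lam * x))
      else -C * Real.exp (lam * x) with hψ
  set ψ' : ℝ → ℝ := fun x => if -L ≤ x then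
      (if x ≤ L then lam * Real.cosh (lam * x) else C * -lam * Real.exp (-lam * x))
      else -C * lam * Real.exp (lam * x) with hψ'
  -- local formulas
  have hψ_left : ∀ x : ℝ, x < -L → ψ x = -C * Real.exp (lam * x) := by
    intro x hx; simp [hψ, not_le.mpr hx]
  have hψ_mid : ∀ x : ℝ, -L ≤ x → x ≤ L → ψ x = Real.sinh (lam * x) := by
    intro x hx hx'; simp [hψ, hx, hx']
  have hψ_right : ∀ x : ℝ, L < x → ψ x = C * Real.exp (-lam * x) := by
    intro x hx
    have : -L ≤ x := by linarith
    simp [hψ, this, not_le.mpr hx]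
  have hψ'_left : ∀ x : ℝ, x < -L → ψ' x = -C * lam * Real.exp (lam * x) := by
    intro x hx; simp [hψ', not_le.mpr hx]
  have hψ'_mid : ∀ x : ℝ, -L ≤ x → x ≤ L → ψ' x = lam * Real.cosh (lam * x) := by
    intro x hx hx'; simp [hψ', hx, hx']
  have hψ'_right : ∀ x : ℝ, L < x → ψ' x = C * -lam * Real.exp (-lam * x) := by
    intro x hx
    have : -L ≤ x := by linarith
    simp [hψ', this, not_le.mpr hx]
  refine ⟨ψ, ψ', ⟨?_, ?_, ?_, ?_, ?_⟩, ?_, ?_⟩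
  · -- continuity
    have hinner : Continuous fun x : ℝ =>
        (if x ≤ L then Real.sinh (lam * x) else C * Real.exp (-lam * x)) := by
      apply Continuous.if_le
      · exact Real.continuous_sinh.comp (continuous_const.mul continuous_id)
      · exact continuous_const.mul (Real.continuous_exp.comp
          (continuous_const.mul continuous_id))
      · exact continuous_id
      · exact continuous_const
      · intro x hx
        rw [hx, show -lam * L = -(lam * L) by ring, hCexp]
    have houter : Continuous fun x : ℝ => -C * Real.exp (lam * x) :=
      continuous_const.mul (Real.continuous_exp.comp (continuous_const.mul continuous_id))
    have hagree : ∀ x : ℝ, (fun _ : ℝ => -L) x = id x →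
        (if x ≤ L then Real.sinh (lam * x) else C * Real.exp (-lam * x))
          = -C * Real.exp (lam * x) := by
      intro x hx
      simp only [id] at hx
      rw [← hx]
      have hLL : (-L : ℝ) ≤ L := by linarith
      rw [if_pos hLL, show lam * -L = -(lam * L) by ring, Real.sinh_neg, ← hCexp]
      ring_nf
    exact Continuous.if_le hinner houter continuous_const continuous_id hagree
  · -- tendsto atTop
    have hev : ψ =ᶠ[atTop] fun x => C * Real.exp (-lam * x) := by
      filter_upwards [eventually_gt_atTop L] with x hx
      exact hψ_right x hx
    have : Tendsto (fun x : ℝ => C * Real.exp (-lam * x)) atTop (𝓝 (C * 0)) := by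
      apply Tendsto.const_mul
      apply Real.tendsto_exp_atBot.comp
      apply Tendsto.const_mul_atTop_of_neg (neg_neg_iff_pos.mpr h1) tendsto_id
    rw [mul_zero] at this
    exact Tendsto.congr' hev.symm this
  · -- tendsto atBot
    have hev : ψ =ᶠ[atBot] fun x => -C * Real.exp (lam * x) := by
      filter_upwards [eventually_lt_atBot (-L)] with x hx
      exact hψ_left x hx
    have : Tendsto (fun x : ℝ => -C * Real.exp (lam * x)) atBot (𝓝 (-C * 0)) := by
      apply Tendsto.const_mul
      apply Real.tendsto_exp_atBot.comp
      exact Tendsto.const_mul_atBot h1 tendsto_id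
    rw [mul_zero] at this
    exact Tendsto.congr' hev.symm this
  · -- ODE away from ±L
    intro x hxL hxnL
    rcases lt_trichotomy x (-L) with hx | hx | hx
    · -- left region
      have hmem : Iio (-L) ∈ 𝓝 x := Iio_mem_nhds hx
      have e1 : ψ =ᶠ[𝓝 x] fun y => -C * Real.exp (lam * y) :=
        eventually_of_mem hmem fun y hy => hψ_left y hy
      have e2 : ψ' =ᶠ[𝓝 x] fun y => -C * lam * Real.exp (lam * y) :=
        eventually_of_mem hmem fun y hy => hψ'_left y hy
      constructor
      · rw [hψ'_left x hx]
        exact (hasDerivAt_const_mul_exp (-C) lam x).congr_of_eventuallyEq e1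
      · have h := (hasDerivAt_const_mul_exp (-C * lam) lam x).congr_of_eventuallyEq e2
        have hv : lam ^ 2 * ψ x = -C * lam * lam * Real.exp (lam * x) := by
          rw [hψ_left x hx]; ring
        rw [hv]; exact h
    · exact absurd hx hxnL
    · rcases lt_trichotomy x L with hx' | hx' | hx'
      · -- middle region
        have hmem : Ioo (-L) L ∈ 𝓝 x := Ioo_mem_nhds hx hx'
        have e1 : ψ =ᶠ[𝓝 x] fun y => Real.sinh (lam * y) :=
          eventually_of_mem hmem fun y hy => hψ_mid y hy.1.le hy.2.le
        have e2 : ψ' =ᶠ[𝓝 x] fun y => lam * Real.cosh (lam * y) :=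
          eventually_of_mem hmem fun y hy => hψ'_mid y hy.1.le hy.2.le
        constructor
        · rw [hψ'_mid x hx.le hx'.le]
          exact (hasDerivAt_sinh_mul lam x).congr_of_eventuallyEq e1
        · have h := (hasDerivAt_const_mul_cosh lam lam x).congr_of_eventuallyEq e2
          have hv : lam ^ 2 * ψ x = lam * lam * Real.sinh (lam * x) := by
            rw [hψ_mid x hx.le hx'.le]; ring
          rw [hv]; exact h
      · exact absurd hx' hxL
      · -- right region
        have hmem : Ioi L ∈ 𝓝 x := Ioi_mem_nhds hx'
        have e1 : ψ =ᶠ[𝓝 x] fun y => C * Real.exp (-lam * y) :=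
          eventually_of_mem hmem fun y hy => hψ_right y hy
        have e2 : ψ' =ᶠ[𝓝 x] fun y => C * -lam * Real.exp (-lam * y) :=
          eventually_of_mem hmem fun y hy => hψ'_right y hy
        constructor
        · rw [hψ'_right x hx']
          exact (hasDerivAt_const_mul_exp C (-lam) x).congr_of_eventuallyEq e1
        · have h := (hasDerivAt_const_mul_exp (C * -lam) (-lam) x).congr_of_eventuallyEq e2
          have hv : lam ^ 2 * ψ x = C * -lam * -lam * Real.exp (-lam * x) := by
            rw [hψ_right x hx']; ring
          rw [hv]; exact h
  · -- jump conditions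
    intro x hx
    rcases hx with hx | hx
    · rw [hx]
      refine ⟨C * -lam * Real.exp (-lam * L), lam * Real.cosh (lam * L), ?_, ?_, ?_⟩
      · have e2 : ψ' =ᶠ[𝓝[>] L] fun y => C * -lam * Real.exp (-lam * y) :=
          eventually_of_mem self_mem_nhdsWithin fun y hy => hψ'_right y hy
        refine Tendsto.congr' e2.symm ?_
        have hc : ContinuousAt (fun y : ℝ => C * -lam * Real.exp (-lam * y)) L := by
          fun_prop
        exact hc.continuousWithinAt.tendsto
      · have e2 : ψ' =ᶠ[𝓝[<] L] fun y => lam * Real.cosh (lam * y) := by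
          filter_upwards [Ioo_mem_nhdsLT (by linarith : (-L : ℝ) < L)] with y hy
          exact hψ'_mid y hy.1.le hy.2.le
        refine Tendsto.congr' e2.symm ?_
        have hc : ContinuousAt (fun y : ℝ => lam * Real.cosh (lam * y)) L := by fun_prop
        exact hc.continuousWithinAt.tendsto
      · rw [hψ_mid L (by linarith) le_rfl]
        have h4 : C * Real.exp (-lam * L) = Real.sinh (lam * L) := by
          rw [show -lam * L = -(lam * L) by ring]; exact hCexp
        have h5 := Real.sinh_add_cosh (lam * L)
        nlinarith [key, h4, h5]
    · rw [hx]
      refine ⟨lam * Real.cosh (lam * -L), -C * lam * Real.exp (lam * -L), ?_, ?_, ?_⟩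
      · have e2 : ψ' =ᶠ[𝓝[>] (-L)] fun y => lam * Real.cosh (lam * y) := by
          filter_upwards [Ioo_mem_nhdsGT (by linarith : (-L : ℝ) < L)] with y hy
          exact hψ'_mid y hy.1.le hy.2.le
        refine Tendsto.congr' e2.symm ?_
        have hc : ContinuousAt (fun y : ℝ => lam * Real.cosh (lam * y)) (-L) := by fun_prop
        exact hc.continuousWithinAt.tendsto
      · have e2 : ψ' =ᶠ[𝓝[<] (-L)] fun y => -C * lam * Real.exp (lam * y) :=
          eventually_of_mem self_mem_nhdsWithin fun y hy => hψ'_left y hy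
        refine Tendsto.congr' e2.symm ?_
        have hc : ContinuousAt (fun y : ℝ => -C * lam * Real.exp (lam * y)) (-L) := by
          fun_prop
        exact hc.continuousWithinAt.tendsto
      · rw [hψ_mid (-L) le_rfl (by linarith)]
        rw [show lam * -L = -(lam * L) by ring, Real.cosh_neg, Real.sinh_neg]
        have h4 : C * Real.exp (-(lam * L)) = Real.sinh (lam * L) := hCexp
        have h5 := Real.sinh_add_cosh (lam * L)
        nlinarith [key, h4, h5]
  · -- nonzero
    intro h
    have := congrFun h L
    rw [hψ_mid L (by linarith) le_rfl] at this
    have hpos : 0 < Real.sinh (lam * L) :=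
      Real.sinh_pos_iff.mpr (by positivity)
    simp only [Pi.zero_apply] at this
    linarith
  · -- odd
    intro x
    by_cases hx : -L ≤ x
    · by_cases hx' : x ≤ L
      · rw [hψ_mid x hx hx', hψ_mid (-x) (by linarith) (by linarith),
          show lam * -x = -(lam * x) by ring, Real.sinh_neg]
      · push_neg at hx'
        rw [hψ_right x hx', hψ_left (-x) (by linarith)]
        rw [show lam * -x = -lam * x by ring]
        ring
    · push_neg at hx
      rw [hψ_left x hx, hψ_right (-x) (by linarith)]
      rw [show -lam * -x = lam * x by ring]
      ring
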